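/- Let X be a topological space covered by an open cover U = {U_i}. If x ∈ U_i and y ∈ U_j, then any continuous path γ from x to y in X is carried by some edge path on the nerve N(U) from vertex i to vertex j; that is, there is an edge path η : {0,…,m} → N(U) with η(0)=i, η(m)=j and a parametrisation of γ such that γ(k/m) ∈ U_{η(k)} for each k, and γ((k/m,(k+1)/m)) ⊆ U_{η(k)} ∪ U_{η(k+1)} for each k < m. -/

import Mathlib

/-!
STATEMENT 1 (Path Carrier): If `U = {U_i}` is an open cover of `X`, `x ∈ U i`, `y ∈ U j`,
then any path `γ` from `x` to `y` is carried by some edge path on the nerve of `U` from `i`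
to `j`.
-/

open unitInterval

variable {X : Type*} [TopologicalSpace X] {ι : Type*}

/-- `γ` (with the given parametrisation) is carried by the edge path `η 0, …, η m` on the
nerve: `γ(k/m) ∈ U (η k)` for `k ≤ m` and `γ((k/m,(k+1)/m)) ⊆ U (η k) ∪ U (η (k+1))` for
`k < m` (when `m = 0` the whole path lies in `U (η 0)`). -/
def Carries (U : ι → Set X) {x y : X} (γ : Path x y) (m : ℕ) (η : ℕ → ι) : Prop :=
  (∀ k : ℕ, k ≤ m → γ.extend ((k : ℝ) / m) ∈ U (η k)) ∧
  (∀ k : ℕ, k < m → ∀ t : ℝ, (k : ℝ) / m < t → t < ((k : ℝ) + 1) / m →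
      γ.extend t ∈ U (η k) ∪ U (η (k + 1))) ∧
  (m = 0 → ∀ t : unitInterval, γ t ∈ U (η 0))

/-- `γ` can be parametrised so that it is carried by the edge path `η 0, …, η m`. -/
def CarriedBy (U : ι → Set X) {x y : X} (γ : Path x y) (m : ℕ) (η : ℕ → ι) : Prop :=
  ∃ (f : unitInterval → unitInterval) (hf : Continuous f) (h0 : f 0 = 0) (h1 : f 1 = 1),
    Carries U (γ.reparam f hf h0 h1) m η

/-- Any path from `x ∈ U i` to `y ∈ U j` is carried by some edge path on
the nerve of the open cover `U` from vertex `i` to vertex `j`. -/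
theorem path_carrier (U : ι → Set X) (hUopen : ∀ i, IsOpen (U i))
    (hUcov : ⋃ i, U i = Set.univ) {x y : X} {i j : ι}
    (hx : x ∈ U i) (hy : y ∈ U j) (γ : Path x y) :
    ∃ (m : ℕ) (η : ℕ → ι), η 0 = i ∧ η m = j ∧
      (∀ k : ℕ, k < m → (U (η k) ∩ U (η (k + 1))).Nonempty) ∧
      CarriedBy U γ m η := by
  classical
  obtain ⟨δ, hδ, hball⟩ := lebesgue_number_lemma_of_metric
    (isCompact_Icc (a := (0:ℝ)) (b := 1))
    (fun a => (hUopen a).preimage γ.continuous_extend)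
    (fun t _ => by
      have : γ.extend t ∈ ⋃ a, U a := by rw [hUcov]; trivial
      simpa using this)
  obtain ⟨n, hn⟩ := exists_nat_one_div_lt hδ
  set N : ℕ := n + 1 with hNdef
  have hN0 : (0:ℝ) < N := by positivity
  have hN1 : 1 ≤ N := by omega
  have hNδ : 1 / (N:ℝ) < δ := by push_cast [hNdef]; exact_mod_cast hn
  have key : ∀ k : ℕ, ∃ a : ι, k < N →
      ∀ t : ℝ, (k:ℝ)/N ≤ t → t ≤ ((k:ℝ)+1)/N → γ.extend t ∈ U a := by
    intro k
    by_cases hk : k < N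
    · have hmem : (k:ℝ)/N ∈ Set.Icc (0:ℝ) 1 := by
        constructor
        · positivity
        · rw [div_le_one hN0]; exact_mod_cast hk.le
      obtain ⟨a, ha⟩ := hball _ hmem
      refine ⟨a, fun _ t h1 h2 => ha ?_⟩
      have heq : ((k:ℝ)+1)/N = (k:ℝ)/N + 1/N := by ring
      have : dist t ((k:ℝ)/N) < δ := by
        rw [Real.dist_eq, abs_lt]
        constructor <;> [linarith; linarith [heq ▸ h2]]
      exact Metric.mem_ball.mpr this
    · exact ⟨i, fun h => absurd h hk⟩
  choose c hc using key
  set η : ℕ → ι := fun k => if k = 0 then i else if k ≤ N then c (k-1) else j with hη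
  have hη0 : η 0 = i := by simp [hη]
  have hηm : η (N+1) = j := by
    simp only [hη]; rw [if_neg (by omega), if_neg (by omega)]
  have hηk : ∀ k, 1 ≤ k → k ≤ N → η k = c (k-1) := by
    intro k h1 h2; simp only [hη]; rw [if_neg (by omega), if_pos h2]
  have hcast : ∀ k : ℕ, 1 ≤ k → ((k-1 : ℕ) : ℝ) = (k:ℝ) - 1 := by
    intro k h; push_cast [Nat.cast_sub h]; ring
  -- x ∈ U (c 0)
  have hx0 : x ∈ U (c 0) := by
    have := hc 0 (by omega) 0 (by simp) (by positivity)
    rwa [Path.extend_zero] at this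
  have hy0 : y ∈ U (c (N-1)) := by
    have := hc (N-1) (by omega) 1 ?_ ?_
    · rwa [Path.extend_one] at this
    · rw [div_le_one hN0, hcast _ hN1]; linarith
    · rw [le_div_iff₀ hN0, hcast _ hN1]; linarith
  refine ⟨N+1, η, hη0, hηm, ?_, ?_⟩
  · -- nonempty intersections
    intro k hk
    rcases Nat.eq_zero_or_pos k with rfl | hk1
    · refine ⟨x, hx, ?_⟩
      rw [hηk 1 le_rfl hN1]; simpa using hx0
    · rcases eq_or_lt_of_le (Nat.lt_succ_iff.mp hk) with hkeq | hkN
      · refine ⟨y, ?_, ?_⟩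
        · rw [hkeq, hηk N hN1 le_rfl]; exact hy0
        · rw [hkeq, hηm]; exact hy
      · refine ⟨γ.extend ((k:ℝ)/N), ?_, ?_⟩
        · rw [hηk k hk1 hkN.le]
          refine hc (k-1) (by omega) _ ?_ ?_
          · rw [hcast _ hk1, div_le_div_iff_of_pos_right hN0]; linarith
          · rw [hcast _ hk1]; simp
        · rw [hηk (k+1) (by omega) hkN]
          refine hc k hkN _ le_rfl ?_
          · rw [div_le_div_iff_of_pos_right hN0]; linarith
  · -- CarriedBy
    set s : ℝ := ((N:ℝ)+1)/N with hs
    have hsN : s * (N:ℝ) = (N:ℝ)+1 := div_mul_cancel₀ _ hN0.ne'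
    have hs1 : 1 ≤ s := by rw [hs, le_div_iff₀ hN0]; linarith
    have hs0 : 0 ≤ s := by positivity
    refine ⟨fun t => ⟨min 1 (s * t),
        ⟨le_min zero_le_one (mul_nonneg hs0 t.2.1), min_le_left _ _⟩⟩,
      (continuous_const.min (continuous_const.mul continuous_subtype_val)).subtype_mk _,
      ?_, ?_, ?_, ?_, fun h => absurd h (by omega)⟩
    · ext; simp
    · ext; show min 1 (s*1) = 1; rw [mul_one, min_eq_left hs1]
    · -- vertices
      intro k hk
      have hmem : (k:ℝ)/((N+1 : ℕ):ℝ) ∈ Set.Icc (0:ℝ) 1 := by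
        constructor
        · positivity
        · rw [div_le_one (by positivity)]; exact_mod_cast hk
      rw [Path.extend_apply _ hmem]
      show γ ⟨min 1 (s * ((k:ℝ)/((N+1:ℕ):ℝ))), _⟩ ∈ U (η k)
      have hval : s * ((k:ℝ)/((N+1:ℕ):ℝ)) = (k:ℝ)/N := by
        push_cast [hs]; field_simp
      rcases eq_or_lt_of_le hk with hkeq | hkN
      · have hval1 : s * ((k:ℝ)/((N+1:ℕ):ℝ)) = s := by
          rw [hkeq]; push_cast; field_simp
        have h1 : min 1 (s * ((k:ℝ)/((N+1:ℕ):ℝ))) = 1 := by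
          rw [hval1, min_eq_left hs1]
        rw [← Path.extend_apply γ (by rw [h1]; exact ⟨zero_le_one, le_rfl⟩)]
        simp only [h1]
        rw [Path.extend_one, hkeq, hηm]
        exact hy
      · have hkN' : k ≤ N := by omega
        have hle : (k:ℝ)/N ≤ 1 := by
          rw [div_le_one hN0]; exact_mod_cast hkN'
        have h1 : min 1 (s * ((k:ℝ)/((N+1:ℕ):ℝ))) = (k:ℝ)/N := by
          rw [hval, min_eq_right hle]
        rw [← Path.extend_apply γ (by rw [h1]; exact ⟨by positivity, hle⟩)]
        simp only [h1]
        rcases Nat.eq_zero_or_pos k with rfl | hk1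
        · simpa [Path.extend_zero, hη0] using hx
        · rw [hηk k hk1 hkN']
          refine hc (k-1) (by omega) _ ?_ ?_
          · rw [hcast _ hk1, div_le_div_iff_of_pos_right hN0]; linarith
          · rw [hcast _ hk1]; simp
    · -- intervals
      intro k hk t ht1 ht2
      have htmem : t ∈ Set.Icc (0:ℝ) 1 := by
        constructor
        · have : (0:ℝ) ≤ (k:ℝ)/((N+1:ℕ):ℝ) := by positivity
          linarith
        · have : ((k:ℝ)+1)/((N+1:ℕ):ℝ) ≤ 1 := by
            rw [div_le_one (by positivity)]; push_cast; exact_mod_cast (by exact_mod_cast Nat.succ_le_of_lt hk : ((k+1:ℕ):ℝ) ≤ ((N+1:ℕ):ℝ))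
          linarith
      rw [Path.extend_apply _ htmem]
      show γ ⟨min 1 (s * t), _⟩ ∈ U (η k) ∪ U (η (k+1))
      have hc1 : ((N+1:ℕ):ℝ) = (N:ℝ)+1 := by push_cast; ring
      rw [hc1] at ht1 ht2
      rcases eq_or_lt_of_le (Nat.lt_succ_iff.mp hk) with hkeq | hkN
      · -- k = N : image is 1
        rw [hkeq] at ht1
        have hst : 1 ≤ s * t := by
          have h2 : (N:ℝ) < t * ((N:ℝ)+1) := by
            rw [div_lt_iff₀ (by positivity)] at ht1; linarith
          rw [hs, div_mul_eq_mul_div, le_div_iff₀ hN0]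
          nlinarith
        have hmin : min 1 (s*t) = 1 := min_eq_left hst
        rw [← Path.extend_apply γ (by rw [hmin]; exact ⟨zero_le_one, le_rfl⟩)]
        simp only [hmin]
        rw [Path.extend_one]
        right
        rw [hkeq, hηm]
        exact hy
      · -- k < N
        have hkN' : k + 1 ≤ N := hkN
        have hub : s * t < ((k:ℝ)+1)/N := by
          have h2 : t < ((k:ℝ)+1)/((N:ℝ)+1) := ht2
          rw [lt_div_iff₀ hN0]
          calc s * t * N = ((N:ℝ)+1) * t := by rw [hs]; field_simp
            _ < ((N:ℝ)+1) * (((k:ℝ)+1)/((N:ℝ)+1)) := by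
                apply mul_lt_mul_of_pos_left h2 (by positivity)
            _ = (k:ℝ)+1 := by field_simp
        have hlb : (k:ℝ)/N < s * t := by
          have h2 : (k:ℝ)/((N:ℝ)+1) < t := ht1
          rw [div_lt_iff₀ hN0]
          calc (k:ℝ) = ((N:ℝ)+1) * ((k:ℝ)/((N:ℝ)+1)) := by field_simp
            _ < ((N:ℝ)+1) * t := mul_lt_mul_of_pos_left h2 (by positivity)
            _ = s * t * N := by rw [hs]; field_simp
        have hub1 : s * t ≤ 1 := by
          have : ((k:ℝ)+1)/N ≤ 1 := by
            rw [div_le_one hN0]; exact_mod_cast hkN'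
          linarith
        have hmin : min 1 (s*t) = s * t := min_eq_right hub1
        rw [← Path.extend_apply γ (by rw [hmin]; exact ⟨mul_nonneg hs0 htmem.1, hub1⟩)]
        simp only [hmin]
        right
        rw [hηk (k+1) (by omega) hkN']
        have : (k+1) - 1 = k := by omega
        rw [this]
        exact hc k hkN _ hlb.le hub.le
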